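/- For any finite supersolvable group G and any conjugacy class A of G, the derived length of G/C_G(A) is at most 2·η(AA⁻¹) − 1, where A⁻¹ = {a⁻¹ : a ∈ A} and η(AA⁻¹) is the number of distinct conjugacy classes of G whose union is AA⁻¹. -/

import Mathlib

open Pointwise
open scoped commutatorElement

/-- A group is supersolvable if it has a normal series with all terms normal
in the whole group and all factors cyclic. -/
def IsSupersolvable (G : Type*) [Group G] : Prop :=
  ∃ (n : ℕ) (s : Fin (n + 1) → Subgroup G),
    s 0 = ⊥ ∧ s (Fin.last n) = ⊤ ∧
    ∃ _ : ∀ i, (s i).Normal,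
      ∀ i : Fin n, s i.castSucc ≤ s i.succ ∧
        IsCyclic (↥(s i.succ) ⧸ (s i.castSucc).subgroupOf (s i.succ))

/-- The conjugacy class of `a` in `G`. -/
def conjClass {G : Type*} [Group G] (a : G) : Set G := {x | ∃ g : G, g⁻¹ * a * g = x}

/-- The number of distinct conjugacy classes of `G` meeting a set `X`. -/
noncomputable def eta {G : Type*} [Group G] (X : Set G) : ℕ :=
  ((fun x => conjClass x) '' X).ncard

section Basic
variable {G : Type*} [Group G]

lemma mem_conjClass_self (a : G) : a ∈ conjClass a := ⟨1, by group⟩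

lemma conjClass_conj_mem {a x : G} (hx : x ∈ conjClass a) (g : G) :
    g⁻¹ * x * g ∈ conjClass a := by
  obtain ⟨h, rfl⟩ := hx
  exact ⟨h * g, by group⟩

lemma conjClass_conj_mem' {a x : G} (hx : x ∈ conjClass a) (g : G) :
    g * x * g⁻¹ ∈ conjClass a := by
  simpa using conjClass_conj_mem hx g⁻¹

lemma conjClass_one : conjClass (1 : G) = {1} := by
  ext x
  constructor
  · rintro ⟨g, rfl⟩; simp
  · rintro rfl; exact mem_conjClass_self 1

lemma one_mem_XX (a : G) : (1 : G) ∈ conjClass a * (conjClass a)⁻¹ :=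
  ⟨a, mem_conjClass_self a, a⁻¹, by simpa using mem_conjClass_self a, by group⟩

lemma commutator_mem_XX {a x : G} (hx : x ∈ conjClass a) (g : G) :
    x * g * x⁻¹ * g⁻¹ ∈ conjClass a * (conjClass a)⁻¹ := by
  refine ⟨x, hx, g * x⁻¹ * g⁻¹, ?_, by group⟩
  simp only [Set.mem_inv]
  have := conjClass_conj_mem' hx g
  simpa [mul_assoc] using this

end Basic

section Quot
variable {G H : Type*} [Group G] [Group H]

lemma conjClass_map (f : G →* H) (hf : Function.Surjective f) (a : G) :
    conjClass (f a) = f '' conjClass a := by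
  ext y
  constructor
  · rintro ⟨g, rfl⟩
    obtain ⟨g', rfl⟩ := hf g
    exact ⟨g'⁻¹ * a * g', ⟨g', rfl⟩, by simp⟩
  · rintro ⟨x, ⟨g, rfl⟩, rfl⟩
    exact ⟨f g, by simp⟩

lemma image_XX (f : G →* H) (hf : Function.Surjective f) (a : G) :
    conjClass (f a) * (conjClass (f a))⁻¹ = f '' (conjClass a * (conjClass a)⁻¹) := by
  rw [conjClass_map f hf]
  ext y
  constructor
  · rintro ⟨u, ⟨x, hx, rfl⟩, v, hv, rfl⟩
    rw [Set.mem_inv] at hv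
    obtain ⟨x', hx', hx'v⟩ := hv
    refine ⟨x * x'⁻¹, ⟨x, hx, x'⁻¹, by simpa using hx', rfl⟩, ?_⟩
    have : f x' = v⁻¹ := hx'v
    simp [this]
  · rintro ⟨w, ⟨x, hx, v, hv, rfl⟩, rfl⟩
    rw [Set.mem_inv] at hv
    refine ⟨f x, ⟨x, hx, rfl⟩, f v, ?_, by simp⟩
    rw [Set.mem_inv]
    exact ⟨v⁻¹, hv, by simp⟩

variable [Finite G]

lemma eta_image_eq_image (f : G →* H) (hf : Function.Surjective f) (X : Set G) :
    (fun x => conjClass x) '' (f '' X) = (fun C => f '' C) '' ((fun x => conjClass x) '' X) := by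
  rw [← Set.image_comp, ← Set.image_comp]
  exact Set.image_congr fun x _ => conjClass_map f hf x

lemma eta_map_le (f : G →* H) (hf : Function.Surjective f) (X : Set G) :
    eta (f '' X) ≤ eta X := by
  unfold eta
  rw [eta_image_eq_image f hf]
  exact Set.ncard_image_le (Set.toFinite _)

lemma eta_map_drop (f : G →* H) (hf : Function.Surjective f) (X : Set G)
    (h1 : (1 : G) ∈ X) {m : G} (hm : m ∈ X) (hm1 : m ≠ 1)
    (hfm : f m = 1) : eta (f '' X) ≤ eta X - 1 := by
  classical
  set S := (fun x => conjClass x) '' X with hS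
  have hSfin : S.Finite := Set.toFinite _
  have hone : conjClass (1 : G) ∈ S := ⟨1, h1, rfl⟩
  have hmm : conjClass m ∈ S := ⟨m, hm, rfl⟩
  have hne : conjClass m ≠ conjClass (1 : G) := by
    intro h
    have : m ∈ conjClass (1 : G) := h ▸ mem_conjClass_self m
    rw [conjClass_one] at this
    exact hm1 this
  have himg : (fun C => f '' C) '' S = (fun C => f '' C) '' (S \ {conjClass (1 : G)}) := by
    apply Set.Subset.antisymm
    · rintro y ⟨C, hC, rfl⟩
      by_cases hCe : C = conjClass (1 : G)
      · subst hCe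
        refine ⟨conjClass m, ⟨hmm, hne⟩, ?_⟩
        show f '' conjClass m = f '' conjClass (1 : G)
        rw [← conjClass_map f hf, ← conjClass_map f hf, hfm, map_one]
      · exact ⟨C, ⟨hC, hCe⟩, rfl⟩
    · exact Set.image_mono Set.diff_subset
  unfold eta
  rw [eta_image_eq_image f hf, ← hS, himg]
  calc ((fun C => f '' C) '' (S \ {conjClass (1 : G)})).ncard
      ≤ (S \ {conjClass (1 : G)}).ncard := Set.ncard_image_le (Set.toFinite _)
    _ = S.ncard - 1 := Set.ncard_diff_singleton_of_mem hone

lemma two_le_eta (X : Set G) (h1 : (1 : G) ∈ X) {m : G} (hm : m ∈ X) (hm1 : m ≠ 1) :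
    2 ≤ eta X := by
  have hne : conjClass m ≠ conjClass (1 : G) := by
    intro h
    have : m ∈ conjClass (1 : G) := h ▸ mem_conjClass_self m
    rw [conjClass_one] at this
    exact hm1 this
  have := (Set.one_lt_ncard (s := (fun x => conjClass x) '' X) (Set.toFinite _)).mpr
    ⟨conjClass m, ⟨m, hm, rfl⟩, conjClass (1 : G), ⟨1, h1, rfl⟩, hne⟩
  unfold eta
  omega

end Quot

section Cyclic
variable {G : Type*} [Group G]

variable {G : Type*} [Group G]

/-- In a cyclic subgroup, any two elements commute (as elements of `G`). -/
lemma cyclic_subgroup_comm (M : Subgroup G) [IsCyclic ↥M]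
    {m₁ m₂ : G} (h₁ : m₁ ∈ M) (h₂ : m₂ ∈ M) : m₁ * m₂ = m₂ * m₁ := by
  obtain ⟨c, hc⟩ := IsCyclic.exists_generator (α := ↥M)
  obtain ⟨i, hi⟩ := Subgroup.mem_zpowers_iff.mp (hc ⟨m₁, h₁⟩)
  obtain ⟨j, hj⟩ := Subgroup.mem_zpowers_iff.mp (hc ⟨m₂, h₂⟩)
  have e1 : m₁ = ((c : ↥M) : G) ^ i := by
    have := congrArg (Subtype.val) hi; simpa using this.symm
  have e2 : m₂ = ((c : ↥M) : G) ^ j := by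
    have := congrArg (Subtype.val) hj; simpa using this.symm
  rw [e1, e2, ← zpow_add, ← zpow_add, add_comm]

/-- Conjugation formula: each `g` acts on a cyclic normal subgroup by a power map. -/
lemma conj_zpow_exponent (M : Subgroup G) [M.Normal] {c : G} (hc : c ∈ M)
    (hgen : ∀ x : ↥M, x ∈ Subgroup.zpowers (⟨c, hc⟩ : ↥M)) (g : G) :
    ∃ s : ℤ, ∀ j : ℤ, g * c ^ j * g⁻¹ = c ^ (s * j) := by
  have hmem : g * c * g⁻¹ ∈ M := Subgroup.Normal.conj_mem ‹M.Normal› c hc g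
  obtain ⟨s, hs⟩ := Subgroup.mem_zpowers_iff.mp (hgen ⟨g * c * g⁻¹, hmem⟩)
  have hs' : c ^ s = g * c * g⁻¹ := congrArg Subtype.val hs
  refine ⟨s, fun j => ?_⟩
  calc g * c ^ j * g⁻¹ = (g * c * g⁻¹) ^ j := by rw [conj_zpow]
    _ = (c ^ s) ^ j := by rw [hs']
    _ = c ^ (s * j) := by rw [← zpow_mul]

lemma conj_fix_comm {C m : G} (h : C * m * C⁻¹ = m) : m * C = C * m := by
  have := congrArg (fun x => x * C) h
  simpa [mul_assoc] using this.symm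

/-- Commutators centralize any cyclic normal subgroup. -/
lemma commutator_mem_centralizer_of_cyclic (M : Subgroup G) [M.Normal] [IsCyclic ↥M]
    (g h : G) : ⁅g, h⁆ ∈ Subgroup.centralizer (M : Set G) := by
  obtain ⟨c, hc⟩ := IsCyclic.exists_generator (α := ↥M)
  obtain ⟨cG, hcG⟩ := c
  obtain ⟨s, hg⟩ := conj_zpow_exponent M hcG hc g
  obtain ⟨s', hg'⟩ := conj_zpow_exponent M hcG hc g⁻¹
  obtain ⟨t, hh⟩ := conj_zpow_exponent M hcG hc h
  obtain ⟨t', hh'⟩ := conj_zpow_exponent M hcG hc h⁻¹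
  have hss' : cG ^ (s * s') = cG := by
    have h1 := hg' 1
    have h2 := hg (s' * 1)
    rw [zpow_one] at h1
    calc cG ^ (s * s') = cG ^ (s * (s' * 1)) := by ring_nf
      _ = g * cG ^ (s' * 1) * g⁻¹ := (h2).symm
      _ = g * (g⁻¹ * cG * g⁻¹⁻¹) * g⁻¹ := by rw [← h1]
      _ = cG := by group
  have htt' : cG ^ (t * t') = cG := by
    have h1 := hh' 1
    have h2 := hh (t' * 1)
    rw [zpow_one] at h1
    calc cG ^ (t * t') = cG ^ (t * (t' * 1)) := by ring_nf
      _ = h * cG ^ (t' * 1) * h⁻¹ := (h2).symm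
      _ = h * (h⁻¹ * cG * h⁻¹⁻¹) * h⁻¹ := by rw [← h1]
      _ = cG := by group
  rw [Subgroup.mem_centralizer_iff]
  intro m hm
  obtain ⟨j, hj⟩ := Subgroup.mem_zpowers_iff.mp (hc ⟨m, hm⟩)
  have hmj : m = cG ^ j := by
    have := congrArg (Subtype.val) hj; simpa using this.symm
  have key : ⁅g, h⁆ * m * ⁅g, h⁆⁻¹ = m := by
    rw [hmj]
    have e0 : ⁅g, h⁆ * cG ^ j * ⁅g, h⁆⁻¹
        = g * (h * (g⁻¹ * (h⁻¹ * cG ^ j * h⁻¹⁻¹) * g⁻¹⁻¹) * h⁻¹) * g⁻¹ := by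
      rw [commutatorElement_def]; group
    rw [e0, hh' j, hg' (t' * j), hh (s' * (t' * j)), hg (t * (s' * (t' * j)))]
    have : s * (t * (s' * (t' * j))) = (s * s') * ((t * t') * j) := by ring
    rw [this, zpow_mul, hss', zpow_mul, htt']
  exact conj_fix_comm key

end Cyclic

section S2a
variable {G : Type*} [Group G]

variable {G : Type*} [Group G]

lemma commutator_mem_centralizer_conjClass {a : G} (M : Subgroup G) [M.Normal] [IsCyclic ↥M]
    {k l : G}
    (hkM : ∀ m ∈ M, m * k = k * m) (hlM : ∀ m ∈ M, m * l = l * m)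
    (hk : ∀ x ∈ conjClass a, x * k * x⁻¹ * k⁻¹ ∈ M)
    (hl : ∀ x ∈ conjClass a, x * l * x⁻¹ * l⁻¹ ∈ M) :
    ⁅k, l⁆ ∈ Subgroup.centralizer (conjClass a) := by
  rw [Subgroup.mem_centralizer_iff]
  intro x hx
  have Hcomm : ∀ z ∈ conjClass a, (k*l) * z * (k*l)⁻¹ = (l*k) * z * (l*k)⁻¹ := by
    intro z hz
    have hm1 : k * z * k⁻¹ * z⁻¹ ∈ M := by
      have h3 : k * z * k⁻¹ * z⁻¹ = (z * k * z⁻¹ * k⁻¹)⁻¹ := by group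
      rw [h3]
      exact M.inv_mem (hk z hz)
    have hm2 : l * z * l⁻¹ * z⁻¹ ∈ M := by
      have h3 : l * z * l⁻¹ * z⁻¹ = (z * l * z⁻¹ * l⁻¹)⁻¹ := by group
      rw [h3]
      exact M.inv_mem (hl z hz)
    obtain ⟨m1, hm1, e1⟩ : ∃ m, m ∈ M ∧ k * z * k⁻¹ = m * z :=
      ⟨k * z * k⁻¹ * z⁻¹, hm1, by group⟩
    obtain ⟨m2, hm2, e2⟩ : ∃ m, m ∈ M ∧ l * z * l⁻¹ = m * z :=
      ⟨l * z * l⁻¹ * z⁻¹, hm2, by group⟩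
    calc (k*l) * z * (k*l)⁻¹ = k * (l * z * l⁻¹) * k⁻¹ := by group
      _ = k * (m2 * z) * k⁻¹ := by rw [e2]
      _ = (k * m2) * (z * k⁻¹) := by group
      _ = (m2 * k) * (z * k⁻¹) := by rw [hkM m2 hm2]
      _ = m2 * (k * z * k⁻¹) := by group
      _ = m2 * (m1 * z) := by rw [e1]
      _ = m1 * (m2 * z) := by
          rw [← mul_assoc, ← mul_assoc, cyclic_subgroup_comm M hm2 hm1]
      _ = m1 * (l * z * l⁻¹) := by rw [e2]
      _ = (m1 * l) * (z * l⁻¹) := by group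
      _ = (l * m1) * (z * l⁻¹) := by rw [← hlM m1 hm1]
      _ = l * (m1 * z) * l⁻¹ := by group
      _ = l * (k * z * k⁻¹) * l⁻¹ := by rw [e1]
      _ = (l*k) * z * (l*k)⁻¹ := by group
  have hz : (l*k)⁻¹ * x * (l*k) ∈ conjClass a := conjClass_conj_mem hx (l*k)
  have key : ⁅k,l⁆ * x * ⁅k,l⁆⁻¹ = x := by
    have e0 : ⁅k,l⁆ * x * ⁅k,l⁆⁻¹ = (k*l) * ((l*k)⁻¹ * x * (l*k)) * (k*l)⁻¹ := by
      rw [commutatorElement_def]; group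
    rw [e0, Hcomm _ hz]
    group
  exact conj_fix_comm key

lemma derivedSeries_succ_le (n : ℕ) : derivedSeries G (n+1) ≤ derivedSeries G n := by
  rw [derivedSeries_succ]
  refine Subgroup.commutator_le.mpr fun g hg h hh => ?_
  rw [commutatorElement_def]
  exact mul_mem (mul_mem (mul_mem hg hh) (inv_mem hg)) (inv_mem hh)

lemma derivedSeries_le_of_le {i j : ℕ} (h : i ≤ j) :
    derivedSeries G j ≤ derivedSeries G i := by
  induction h with
  | refl => exact le_rfl
  | step h ih => exact le_trans (derivedSeries_succ_le _) ih

end S2a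

section SS
variable {G : Type*} [Group G]

variable {G : Type*} [Group G]

lemma exists_cyclic_normal [Nontrivial G] (hG : IsSupersolvable G) :
    ∃ M : Subgroup G, M.Normal ∧ IsCyclic ↥M ∧ M ≠ ⊥ := by
  obtain ⟨n, s, h0, hlast, hnorm, hstep⟩ := hG
  haveI : ∀ i, (s i).Normal := hnorm
  by_cases hex : ∃ i : Fin n, s i.castSucc = ⊥ ∧ s i.succ ≠ ⊥
  · obtain ⟨i, h1, h2⟩ := hex
    refine ⟨s i.succ, hnorm _, ?_, h2⟩
    haveI hc := (hstep i).2
    have heq : (s i.castSucc).subgroupOf (s i.succ) = (⊥ : Subgroup ↥(s i.succ)) := by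
      rw [h1, Subgroup.bot_subgroupOf]
    haveI : ((s i.castSucc).subgroupOf (s i.succ)).Normal := Subgroup.normal_subgroupOf
    let ψ := (QuotientGroup.quotientMulEquivOfEq heq).trans
      (QuotientGroup.quotientBot (G := ↥(s i.succ)))
    exact isCyclic_of_surjective ψ ψ.surjective
  · push_neg at hex
    have hall : ∀ k : Fin (n + 1), s k = ⊥ := by
      intro k
      induction k using Fin.induction with
      | zero => exact h0
      | succ i ih => exact hex i ih
    obtain ⟨x, hx⟩ := exists_ne (1 : G)
    have : x ∈ s (Fin.last n) := hlast ▸ Subgroup.mem_top x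
    rw [hall] at this
    exact absurd (Subgroup.mem_bot.mp this) hx

lemma IsSupersolvable.quotient (hG : IsSupersolvable G) (M : Subgroup G) [M.Normal] :
    IsSupersolvable (G ⧸ M) := by
  obtain ⟨n, s, h0, hlast, hnorm, hstep⟩ := hG
  haveI : ∀ i, (s i).Normal := hnorm
  set π := QuotientGroup.mk' M with hπdef
  have hπ : Function.Surjective π := QuotientGroup.mk'_surjective M
  refine ⟨n, fun i => (s i).map π, by show (s 0).map π = ⊥; rw [h0]; exact Subgroup.map_bot π,
    by show (s (Fin.last n)).map π = ⊤; rw [hlast]; exact Subgroup.map_top_of_surjective π hπ,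
    ⟨fun i => Subgroup.Normal.map (hnorm i) π hπ,
     fun i => ⟨Subgroup.map_mono (hstep i).1, ?_⟩⟩⟩
  haveI := (hstep i).2
  set H := s i.succ with hH
  set Klow := s i.castSucc with hK
  haveI : ((Klow.map π).subgroupOf (H.map π)).Normal := inferInstance
  let φ : ↥H →* ↥(H.map π) := π.subgroupMap H
  have hφ : Function.Surjective φ := π.subgroupMap_surjective H
  have hle : Klow.subgroupOf H ≤ Subgroup.comap φ ((Klow.map π).subgroupOf (H.map π)) := by
    intro x hx
    simp only [Subgroup.mem_subgroupOf, Subgroup.mem_comap] at hx ⊢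
    exact ⟨↑x, hx, rfl⟩
  refine isCyclic_of_surjective
    (QuotientGroup.map (Klow.subgroupOf H) ((Klow.map π).subgroupOf (H.map π)) φ hle) ?_
  intro y
  obtain ⟨z, rfl⟩ := QuotientGroup.mk'_surjective _ y
  obtain ⟨w, rfl⟩ := hφ z
  exact ⟨QuotientGroup.mk w, rfl⟩

end SS

section Main
universe u

theorem ssAux (N : ℕ) : ∀ (G : Type u) [Group G] [Finite G], Nat.card G ≤ N →
    IsSupersolvable G → ∀ a : G,
    derivedSeries G (2 * eta (conjClass a * (conjClass a)⁻¹) - 1) ≤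
      Subgroup.centralizer (conjClass a) := by
  induction N with
  | zero =>
    intro G _ _ hcard _ _
    have : 0 < Nat.card G := Nat.card_pos
    omega
  | succ N ih =>
    intro G _ _ hcard hss a
    by_cases hnt : Nontrivial G
    · obtain ⟨M, hMn, hMc, hMbot⟩ := exists_cyclic_normal hss
      haveI := hMn; haveI := hMc
      set π := QuotientGroup.mk' M with hπdef
      have hπ : Function.Surjective π := QuotientGroup.mk'_surjective M
      haveI : Finite (G ⧸ M) := Finite.of_surjective π hπ
      have hcardQ : Nat.card (G ⧸ M) ≤ N := by
        have h1 : Nat.card G = Nat.card (G ⧸ M) * Nat.card M :=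
          Subgroup.card_eq_card_quotient_mul_card_subgroup M
        have h2 : 1 < Nat.card M := (Subgroup.one_lt_card_iff_ne_bot M).mpr hMbot
        have h3 : 0 < Nat.card (G ⧸ M) := Nat.card_pos
        have h4 : Nat.card (G ⧸ M) * 2 ≤ Nat.card (G ⧸ M) * Nat.card M :=
          Nat.mul_le_mul_left _ h2
        omega
      have hssQ : IsSupersolvable (G ⧸ M) := hss.quotient M
      set X := conjClass a * (conjClass a)⁻¹ with hX
      have hXbar : conjClass (π a) * (conjClass (π a))⁻¹ = π '' X := image_XX π hπ a
      have ihQ := ih (G ⧸ M) hcardQ hssQ (π a)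
      rw [hXbar] at ihQ
      set K := Subgroup.comap π (Subgroup.centralizer (conjClass (π a))) with hK
      have hKmem : ∀ g : G, g ∈ K → ∀ x ∈ conjClass a, x * g * x⁻¹ * g⁻¹ ∈ M := by
        intro g hg x hx
        rw [hK, Subgroup.mem_comap, Subgroup.mem_centralizer_iff_commutator_eq_one] at hg
        have hxq : π x ∈ conjClass (π a) := by
          rw [conjClass_map π hπ]; exact ⟨x, hx, rfl⟩
        have hone := hg (π x) hxq
        rw [commutatorElement_def, ← map_inv, ← map_inv, ← map_mul, ← map_mul, ← map_mul] at hone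
        exact (QuotientGroup.eq_one_iff _).mp hone
      have hKle : derivedSeries G (2 * eta (π '' X) - 1) ≤ K := by
        have h1 : Subgroup.map π (derivedSeries G (2 * eta (π '' X) - 1)) ≤
            derivedSeries (G ⧸ M) (2 * eta (π '' X) - 1) :=
          map_derivedSeries_le_derivedSeries π _
        rw [hK]
        exact Subgroup.map_le_iff_le_comap.mp (h1.trans ihQ)
      by_cases hXM : ∃ m, m ∈ M ∧ m ∈ X ∧ m ≠ 1
      · obtain ⟨m, hmM, hmX, hm1⟩ := hXM
        have hdrop : eta (π '' X) ≤ eta X - 1 :=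
          eta_map_drop π hπ X (one_mem_XX a) hmX hm1 ((QuotientGroup.eq_one_iff m).mpr hmM)
        have hn2 : 2 ≤ eta X := two_le_eta X (one_mem_XX a) hmX hm1
        have hKle' : derivedSeries G (2 * eta X - 3) ≤ K :=
          le_trans (derivedSeries_le_of_le (by omega)) hKle
        have hKcent : ⁅K, K⁆ ≤ Subgroup.centralizer (M : Set G) :=
          Subgroup.commutator_le.mpr fun g _ h _ => commutator_mem_centralizer_of_cyclic M g h
        have hKK : ⁅K, K⁆ ≤ K :=
          Subgroup.commutator_le.mpr fun g hg h hh => by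
            rw [commutatorElement_def]
            exact mul_mem (mul_mem (mul_mem hg hh) (inv_mem hg)) (inv_mem hh)
        have hLL : ⁅(⁅K, K⁆ : Subgroup G), ⁅K, K⁆⁆ ≤ Subgroup.centralizer (conjClass a) := by
          refine Subgroup.commutator_le.mpr fun k hk l hl => ?_
          refine commutator_mem_centralizer_conjClass M ?_ ?_ (hKmem k (hKK hk)) (hKmem l (hKK hl))
          · exact fun m' hm' => Subgroup.mem_centralizer_iff.mp (hKcent hk) m' hm'
          · exact fun m' hm' => Subgroup.mem_centralizer_iff.mp (hKcent hl) m' hm'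
        have hsplit : 2 * eta X - 1 = (2 * eta X - 3) + 1 + 1 := by omega
        rw [hsplit, derivedSeries_succ, derivedSeries_succ]
        refine le_trans (Subgroup.commutator_mono ?_ ?_) hLL <;>
          exact Subgroup.commutator_mono hKle' hKle'
      · push_neg at hXM
        have hKC : K ≤ Subgroup.centralizer (conjClass a) := by
          intro g hg
          rw [Subgroup.mem_centralizer_iff_commutator_eq_one]
          intro x hx
          exact hXM _ (hKmem g hg x hx) (commutator_mem_XX hx g)
        have hle : 2 * eta (π '' X) - 1 ≤ 2 * eta X - 1 := by
          have := eta_map_le π hπ X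
          omega
        exact le_trans (le_trans (derivedSeries_le_of_le hle) hKle) hKC
    · intro x _
      rw [Subgroup.mem_centralizer_iff]
      intro y _
      have : Subsingleton G := not_nontrivial_iff_subsingleton.mp hnt
      exact Subsingleton.elim _ _

end Main

/-- Theorem B: for a finite supersolvable group `G` and a conjugacy class
`A` of `G`, `dl(G/C_G(A)) ≤ 2·η(AA⁻¹) − 1`; equivalently the `(2η(AA⁻¹)−1)`-st term
of the derived series of `G` is contained in `C_G(A)`. -/
theorem stmt9 {G : Type*} [Group G] [Fintype G] (hG : IsSupersolvable G) (a : G) :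
    derivedSeries G (2 * eta (conjClass a * (conjClass a)⁻¹) - 1) ≤
      Subgroup.centralizer (conjClass a) := by
  exact ssAux (Nat.card G) G le_rfl hG a
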